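/- arXiv:1910.04085 — 5 statements merged into one kernel-verified Lean document; each statement's English description precedes it below -/
import Mathlib

section
/- Let J ≥ 1 be an integer, P a Borel probability measure on C([0,1]), X a random element of C([0,1]) with law P, x ∈ C([0,1]), and a, b ∈ ℝ with a ≠ 0. Then the ACH depth is scalar affine invariant: D_J(x, P) = D_J(a·x + b, P_{aX+b}) and D̄_J(x, P) = D̄_J(a·x + b, P_{aX+b}), where P_{aX+b} denotes the pushforward of P under the map f ↦ a·f + b (b being identified with the constant function of value b). -/
open MeasureTheory Filter Topology
open scoped ENNReal

noncomputable section

abbrev I01 : Set ℝ := Set.Icc 0 1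

abbrev CI := C(I01, ℝ)

noncomputable instance : MeasurableSpace CI := borel CI
instance : BorelSpace CI := ⟨rfl⟩

/-- The graph of a continuous function on `[0,1]`, as a subset of `ℝ²`. -/
def graph (x : CI) : Set (ℝ × ℝ) := Set.range fun t : I01 => ((t : ℝ), x t)

/-- The area (2-dimensional Lebesgue measure) of the convex hull of a set in `ℝ²`. -/
def ach (A : Set (ℝ × ℝ)) : ℝ := (volume (convexHull ℝ A)).toReal

/-- Ratio of the area of the convex hull of the graphs of a batch of curves to the area of
the convex hull once `x` is added (`0/0 = 0` convention, as division by zero is zero). -/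
def achRatio {m : ℕ} (xs : Fin m → CI) (x : CI) : ℝ :=
  ach (⋃ i, graph (xs i)) / ach ((⋃ i, graph (xs i)) ∪ graph x)

/-- The ACH depth of degree `J` of `x` w.r.t. `P`. -/
def ACHDepth (J : ℕ) (P : Measure CI) (x : CI) : ℝ :=
  ∫ xs, achRatio xs x ∂(Measure.pi fun _ : Fin J => P)

/-- The average ACH depth of degree `J`. -/
def avgACHDepth (J : ℕ) (P : Measure CI) (x : CI) : ℝ :=
  (J : ℝ)⁻¹ * ∑ j ∈ Finset.Icc 1 J, ACHDepth j P x

/-- A curve is non-constant. -/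
def Nonconstant (x : CI) : Prop := ¬ ∃ c : ℝ, ∀ t, x t = c

/-- The empirical ACH depth (`U`-statistic of degree `J`) based on the first `n` curves. -/
def empDepth (J n : ℕ) (X : ℕ → CI) (x : CI) : ℝ :=
  (n.choose J : ℝ)⁻¹ * ∑ s ∈ Finset.powersetCard J (Finset.range n),
    ach (⋃ i ∈ s, graph (X i)) / ach ((⋃ i ∈ s, graph (X i)) ∪ graph x)

/-- The average empirical ACH depth. -/
def avgEmpDepth (J n : ℕ) (X : ℕ → CI) (x : CI) : ℝ :=
  (J : ℝ)⁻¹ * ∑ j ∈ Finset.Icc 1 J, empDepth j n X x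

/-- The band delimited by a finite family of curves. -/
def band {m : ℕ} (xs : Fin m → CI) : Set (ℝ × ℝ) :=
  {p | ∃ t : I01, p.1 = (t : ℝ) ∧ (⨅ i, xs i t) ≤ p.2 ∧ p.2 ≤ ⨆ i, xs i t}

/- ### Auxiliary material -/

open scoped NNReal

lemma prod_smul_right' (k : ℝ≥0) (μ ν : Measure ℝ) [SigmaFinite μ] [SigmaFinite ν] :
    μ.prod (k • ν) = k • μ.prod ν :=
  Measure.prod_eq fun s t _ _ => by
    rw [Measure.smul_apply, Measure.smul_apply, Measure.prod_prod, ENNReal.smul_def,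
      ENNReal.smul_def, smul_eq_mul, smul_eq_mul, mul_left_comm]

lemma map_volume_line (c : ℝ) (hc : c ≠ 0) (d : ℝ) :
    Measure.map (fun y : ℝ => c * y + d) volume = ENNReal.ofReal |c⁻¹| • volume := by
  have h : (fun y : ℝ => c * y + d) = (fun y : ℝ => d + y) ∘ (fun y : ℝ => c * y) := by
    funext y; simp [add_comm]
  rw [h, ← Measure.map_map (measurable_const_add d) (measurable_const_mul c),
    Real.map_volume_mul_left hc, Measure.map_smul]
  congr 1
  exact map_add_left_eq_self volume d

lemma map_volume_plane (c : ℝ) (hc : c ≠ 0) (d : ℝ) :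
    Measure.map (fun p : ℝ × ℝ => (p.1, c * p.2 + d)) volume
      = ENNReal.ofReal |c⁻¹| • volume := by
  have hfun : (fun p : ℝ × ℝ => (p.1, c * p.2 + d))
      = Prod.map (id : ℝ → ℝ) (fun y : ℝ => c * y + d) := rfl
  have hc' : ENNReal.ofReal |c⁻¹| • (volume : Measure ℝ)
      = (|c⁻¹|.toNNReal : ℝ≥0) • (volume : Measure ℝ) := rfl
  rw [hfun, Measure.volume_eq_prod, ← Measure.map_prod_map _ _ measurable_id (by fun_prop),
    Measure.map_id, map_volume_line c hc d, hc', prod_smul_right']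
  rfl

/-- The affine transformation of the plane `(t, y) ↦ (t, a y + b)` as a homeomorphism. -/
def planeHomeo (a b : ℝ) (ha : a ≠ 0) : ℝ × ℝ ≃ₜ ℝ × ℝ where
  toFun p := (p.1, a * p.2 + b)
  invFun p := (p.1, a⁻¹ * p.2 + (-b / a))
  left_inv p := by
    refine Prod.ext rfl ?_
    field_simp
    try ring
  right_inv p := by
    refine Prod.ext rfl ?_
    field_simp
    ring
  continuous_toFun := by fun_prop
  continuous_invFun := by fun_prop

/-- The same map as an affine map. -/
def planeAff (a b : ℝ) : (ℝ × ℝ) →ᵃ[ℝ] (ℝ × ℝ) where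
  toFun p := (p.1, a * p.2 + b)
  linear := LinearMap.prodMap LinearMap.id (a • LinearMap.id)
  map_vadd' p v := by
    refine Prod.ext rfl ?_
    simp [smul_eq_mul]
    ring

lemma ach_image (a b : ℝ) (ha : a ≠ 0) (S : Set (ℝ × ℝ)) :
    ach ((fun p : ℝ × ℝ => (p.1, a * p.2 + b)) '' S) = |a| * ach S := by
  have hhull : convexHull ℝ ((fun p : ℝ × ℝ => (p.1, a * p.2 + b)) '' S)
      = (fun p : ℝ × ℝ => (p.1, a * p.2 + b)) '' convexHull ℝ S :=
    (AffineMap.image_convexHull (planeAff a b) S).symm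
  set e : (ℝ × ℝ) ≃ᵐ (ℝ × ℝ) := (planeHomeo a b ha).toMeasurableEquiv with he
  have himg : ∀ C : Set (ℝ × ℝ),
      (fun p : ℝ × ℝ => (p.1, a * p.2 + b)) '' C = e.symm ⁻¹' C := fun C =>
    (planeHomeo a b ha).toEquiv.image_eq_preimage_symm C
  have hmap : Measure.map (⇑e.symm) volume
      = ENNReal.ofReal |a| • (volume : Measure (ℝ × ℝ)) := by
    have : ⇑e.symm = fun p : ℝ × ℝ => (p.1, a⁻¹ * p.2 + (-b / a)) := rfl
    rw [this, map_volume_plane a⁻¹ (inv_ne_zero ha) (-b / a), inv_inv]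
  have hvol : volume ((fun p : ℝ × ℝ => (p.1, a * p.2 + b)) '' convexHull ℝ S)
      = ENNReal.ofReal |a| * volume (convexHull ℝ S) := by
    rw [himg, ← MeasurableEquiv.map_apply e.symm, hmap]
    simp [Measure.smul_apply, ENNReal.smul_def]
  rw [ach, hhull, hvol, ENNReal.toReal_mul, ENNReal.toReal_ofReal (abs_nonneg a)]
  rfl

lemma graph_affine (a b : ℝ) (f : CI) :
    graph (a • f + ContinuousMap.const I01 b)
      = (fun p : ℝ × ℝ => (p.1, a * p.2 + b)) '' graph f := by
  unfold graph
  rw [← Set.range_comp]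
  rfl

lemma achRatio_affine {m : ℕ} (a b : ℝ) (ha : a ≠ 0) (xs : Fin m → CI) (x : CI) :
    achRatio (fun i => a • xs i + ContinuousMap.const I01 b)
      (a • x + ContinuousMap.const I01 b) = achRatio xs x := by
  simp only [achRatio, graph_affine, ← Set.image_iUnion, ← Set.image_union,
    ach_image a b ha]
  exact mul_div_mul_left _ _ (abs_ne_zero.mpr ha)

/-- The affine transformation `f ↦ a f + b` on `C([0,1])` as a homeomorphism. -/
def ciHomeo (a b : ℝ) (ha : a ≠ 0) : CI ≃ₜ CI where
  toFun f := a • f + ContinuousMap.const I01 b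
  invFun f := a⁻¹ • f + ContinuousMap.const I01 (-b / a)
  left_inv f := by
    ext t
    simp [smul_eq_mul]
    field_simp
    try ring
  right_inv f := by
    ext t
    simp [smul_eq_mul]
    field_simp
    try ring
  continuous_toFun := (continuous_const_smul a).add continuous_const
  continuous_invFun := (continuous_const_smul a⁻¹).add continuous_const

lemma ACHDepth_affine (j : ℕ) (P : Measure CI) [IsProbabilityMeasure P] (x : CI)
    (a b : ℝ) (ha : a ≠ 0) :
    ACHDepth j (P.map fun f : CI => a • f + ContinuousMap.const I01 b)
      (a • x + ContinuousMap.const I01 b) = ACHDepth j P x := by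
  set e : CI ≃ᵐ CI := (ciHomeo a b ha).toMeasurableEquiv with he
  have hTe : (fun f : CI => a • f + ContinuousMap.const I01 b) = ⇑e := rfl
  have hprob : IsProbabilityMeasure (P.map ⇑e) :=
    Measure.isProbabilityMeasure_map e.measurable.aemeasurable
  have hpi : (Measure.pi fun _ : Fin j => P.map ⇑e)
      = (Measure.pi fun _ : Fin j => P).map
          ⇑(MeasurableEquiv.piCongrRight fun _ : Fin j => e) :=
    ((measurePreserving_pi (fun _ : Fin j => P) (fun _ : Fin j => P.map ⇑e)
      (fun _ => ⟨e.measurable, rfl⟩)).map_eq).symm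
  rw [ACHDepth, hTe, hpi, integral_map_equiv]
  refine integral_congr_ae (Filter.Eventually.of_forall fun xs => ?_)
  exact achRatio_affine a b ha xs x

/-- scalar affine invariance of the (average) ACH depth. -/
theorem ach_depth_affine_invariant (J : ℕ) (hJ : 1 ≤ J)
    (P : Measure CI) [IsProbabilityMeasure P] (x : CI) (a b : ℝ) (ha : a ≠ 0) :
    ACHDepth J P x =
      ACHDepth J (P.map fun f : CI => a • f + ContinuousMap.const I01 b)
        (a • x + ContinuousMap.const I01 b) ∧
    avgACHDepth J P x =
      avgACHDepth J (P.map fun f : CI => a • f + ContinuousMap.const I01 b)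
        (a • x + ContinuousMap.const I01 b) := by
  constructor
  · exact (ACHDepth_affine J P x a b ha).symm
  · unfold avgACHDepth
    congr 1
    exact Finset.sum_congr rfl fun j _ => (ACHDepth_affine j P x a b ha).symm

end
end

section
/- Let J ≥ 1 be an integer and P any Borel probability measure on C([0,1]). If (x_n) is a sequence in C([0,1]) with ‖x_n‖_∞ → ∞ as n → ∞, then D_J(x_n, P) → 0 and D̄_J(x_n, P) → 0 (vanishing at infinity of the ACH depth). -/
open MeasureTheory Filter Topology
open scoped ENNReal

noncomputable section

open Set in
lemma tri_vol {t₀ t₁ y₀ z v : ℝ} (ht : t₀ ≠ t₁) (hy : y₀ ≤ z)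
    {C : Set (ℝ × ℝ)} (hC : Convex ℝ C)
    (h1 : (t₀, y₀) ∈ C) (h2 : (t₀, z) ∈ C) (h3 : (t₁, v) ∈ C) :
    ENNReal.ofReal (|t₁ - t₀| * (z - y₀) / 2) ≤ volume C := by
  rcases eq_or_lt_of_le hy with rfl | hy
  · simp
  set l := min t₀ t₁ with hl
  set r := max t₀ t₁ with hr
  have hlr : l < r := min_lt_max.2 ht
  set σ : ℝ → ℝ := fun t => (t - t₁) / (t₀ - t₁) with hσ
  have hσmem : ∀ t ∈ Ioo l r, σ t ∈ Ioo (0:ℝ) 1 := by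
    intro t htm
    rcases lt_or_gt_of_ne ht with h | h
    · have hl' : t₀ < t := by simpa [hl, min_eq_left h.le] using htm.1
      have hr' : t < t₁ := by simpa [hr, max_eq_right h.le] using htm.2
      constructor
      · exact div_pos_of_neg_of_neg (by linarith) (by linarith)
      · rw [div_lt_one_of_neg (by linarith)]; linarith
    · have hl' : t₁ < t := by simpa [hl, min_eq_right h.le] using htm.1
      have hr' : t < t₀ := by simpa [hr, max_eq_left h.le] using htm.2
      constructor
      · exact div_pos (by linarith) (by linarith)
      · rw [div_lt_one (by linarith)]; linarith
  set f : ℝ → ℝ := fun t => v + σ t * (y₀ - v) with hf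
  set g : ℝ → ℝ := fun t => v + σ t * (z - v) with hg
  have hfg : ∀ t ∈ Ioo l r, f t ≤ g t := by
    intro t htm
    have := (hσmem t htm).1
    simp only [hf, hg]
    nlinarith
  have hsub : regionBetween f g (Ioo l r) ⊆ C := by
    rintro ⟨t, y⟩ ⟨htm, hy1, hy2⟩
    have hs0 := (hσmem t htm).1
    have hs1 := (hσmem t htm).2
    set s := σ t with hs
    set w := (y - (1 - s) * v) / s with hw
    have hwy : y = (1 - s) * v + s * w := by rw [hw, mul_comm s, div_mul_cancel₀ _ hs0.ne']; ring
    have hw1 : y₀ ≤ w := by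
      rw [le_div_iff₀ hs0]
      simp only [hf] at hy1; nlinarith
    have hw2 : w ≤ z := by
      rw [div_le_iff₀ hs0]
      simp only [hg] at hy2; nlinarith
    have hzy : (0:ℝ) < z - y₀ := by linarith
    have hmem1 : (t₀, w) ∈ C := by
      have := hC h1 h2 (a := (z - w)/(z - y₀)) (b := (w - y₀)/(z - y₀))
        (div_nonneg (by linarith) hzy.le) (div_nonneg (by linarith) hzy.le)
        (by field_simp; ring)
      have hco : ((z - w)/(z - y₀)) • ((t₀:ℝ), y₀) + ((w - y₀)/(z - y₀)) • ((t₀:ℝ), z) = (t₀, w) := by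
        rw [Prod.ext_iff]
        refine ⟨?_, ?_⟩
        · show (z - w)/(z - y₀) * t₀ + (w - y₀)/(z - y₀) * t₀ = t₀
          field_simp
          ring
        · show (z - w)/(z - y₀) * y₀ + (w - y₀)/(z - y₀) * z = w
          field_simp; ring
      rwa [hco] at this
    have hne : t₀ - t₁ ≠ 0 := sub_ne_zero.2 ht
    have hskey : s * (t₀ - t₁) = t - t₁ := by rw [hs, hσ]; field_simp
    have hcoord : (1 - s) • ((t₁:ℝ), v) + s • ((t₀:ℝ), w) = (t, y) := by
      rw [Prod.ext_iff]
      refine ⟨?_, ?_⟩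
      · show (1 - s) * t₁ + s * t₀ = t
        linear_combination hskey
      · show (1 - s) * v + s * w = y
        linear_combination -hwy
    have := hC h3 hmem1 (a := 1 - s) (b := s) (by linarith) hs0.le (by ring)
    rwa [hcoord] at this
  have hmf : IntegrableOn f (Ioo l r) volume :=
    ((by fun_prop : Continuous f).integrableOn_Icc).mono_set Ioo_subset_Icc_self
  have hmg : IntegrableOn g (Ioo l r) volume :=
    ((by fun_prop : Continuous g).integrableOn_Icc).mono_set Ioo_subset_Icc_self
  have hvol : volume (regionBetween f g (Ioo l r)) =
      ENNReal.ofReal (∫ t in Ioo l r, (g - f) t) := by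
    rw [Measure.volume_eq_prod]
    exact volume_regionBetween_eq_integral hmf hmg measurableSet_Ioo hfg
  have hint : (∫ t in Ioo l r, (g - f) t) = |t₁ - t₀| * (z - y₀) / 2 := by
    have : ∀ t, (g - f) t = ((z - y₀)/(t₀ - t₁)) * (t - t₁) := by
      intro t; simp only [Pi.sub_apply, hf, hg, hσ]; ring
    rw [← MeasureTheory.integral_Ioc_eq_integral_Ioo, ← intervalIntegral.integral_of_le hlr.le]
    simp only [this]
    rw [intervalIntegral.integral_const_mul]
    have : (∫ t in l..r, (t - t₁)) = (r^2 - l^2)/2 - t₁ * (r - l) := by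
      rw [intervalIntegral.integral_sub (continuous_id'.intervalIntegrable l r) (continuous_const.intervalIntegrable l r)]
      rw [integral_id, intervalIntegral.integral_const, smul_eq_mul]
      ring
    rw [this]
    have hne : t₀ - t₁ ≠ 0 := sub_ne_zero.2 ht
    rcases lt_or_gt_of_ne ht with h | h
    · rw [hl, hr, min_eq_left h.le, max_eq_right h.le, abs_of_pos (by linarith : (0:ℝ) < t₁ - t₀)]
      field_simp
      ring
    · rw [hl, hr, min_eq_right h.le, max_eq_left h.le, abs_of_neg (by linarith : t₁ - t₀ < 0)]
      field_simp
      ring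
  calc ENNReal.ofReal (|t₁ - t₀| * (z - y₀) / 2) = volume (regionBetween f g (Ioo l r)) := by
        rw [hvol, hint]
    _ ≤ volume C := measure_mono hsub

lemma graph_subset (z : CI) {R : ℝ} (hR : ‖z‖ ≤ R) :
    graph z ⊆ Set.Icc (0:ℝ) 1 ×ˢ Set.Icc (-R) R := by
  rintro p ⟨t, rfl⟩
  have h1 := z.norm_coe_le_norm t
  rw [Real.norm_eq_abs] at h1
  have h2 := abs_le.mp (h1.trans hR)
  exact ⟨t.2, h2.1, h2.2⟩

lemma vol_hull_le {A : Set (ℝ × ℝ)} {R : ℝ}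
    (hA : A ⊆ Set.Icc (0:ℝ) 1 ×ˢ Set.Icc (-R) R) :
    volume (convexHull ℝ A) ≤ ENNReal.ofReal (2 * R) := by
  have h1 : convexHull ℝ A ⊆ Set.Icc (0:ℝ) 1 ×ˢ Set.Icc (-R) R :=
    convexHull_min hA ((convex_Icc _ _).prod (convex_Icc _ _))
  calc volume (convexHull ℝ A) ≤ volume (Set.Icc (0:ℝ) 1 ×ˢ Set.Icc (-R) R) :=
        measure_mono h1
    _ = ENNReal.ofReal (2 * R) := by
        rw [Measure.volume_eq_prod, Measure.prod_prod, Real.volume_Icc, Real.volume_Icc,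
          ← ENNReal.ofReal_mul (by norm_num : (0:ℝ) ≤ 1 - 0)]
        congr 1
        ring

lemma sum_norm_nonneg {m : ℕ} (xs : Fin m → CI) : 0 ≤ ∑ i, ‖xs i‖ :=
  Finset.sum_nonneg fun _ _ => norm_nonneg _

lemma norm_le_sum {m : ℕ} (xs : Fin m → CI) (i : Fin m) : ‖xs i‖ ≤ ∑ i, ‖xs i‖ :=
  Finset.single_le_sum (fun i _ => norm_nonneg (xs i)) (Finset.mem_univ i)

lemma iUnion_subset_rect {m : ℕ} (xs : Fin m → CI) :
    (⋃ i, graph (xs i)) ⊆ Set.Icc (0:ℝ) 1 ×ˢ Set.Icc (-(∑ i, ‖xs i‖)) (∑ i, ‖xs i‖) :=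
  Set.iUnion_subset fun i => graph_subset _ (norm_le_sum xs i)

lemma union_subset_rect {m : ℕ} (xs : Fin m → CI) (x : CI) :
    (⋃ i, graph (xs i)) ∪ graph x ⊆
      Set.Icc (0:ℝ) 1 ×ˢ Set.Icc (-(∑ i, ‖xs i‖ + ‖x‖)) (∑ i, ‖xs i‖ + ‖x‖) := by
  apply Set.union_subset
  · exact Set.iUnion_subset fun i =>
      graph_subset _ ((norm_le_sum xs i).trans (by linarith [norm_nonneg x]))
  · exact graph_subset _ (by linarith [sum_norm_nonneg xs])

lemma vol_hull_union_ne_top {m : ℕ} (xs : Fin m → CI) (x : CI) :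
    volume (convexHull ℝ ((⋃ i, graph (xs i)) ∪ graph x)) ≠ ⊤ :=
  ((vol_hull_le (union_subset_rect xs x)).trans_lt ENNReal.ofReal_lt_top).ne

lemma ach_iUnion_le {m : ℕ} (xs : Fin m → CI) :
    ach (⋃ i, graph (xs i)) ≤ 2 * ∑ i, ‖xs i‖ := by
  have h := vol_hull_le (iUnion_subset_rect xs)
  calc ach (⋃ i, graph (xs i)) ≤ (ENNReal.ofReal (2 * ∑ i, ‖xs i‖)).toReal :=
        ENNReal.toReal_mono ENNReal.ofReal_ne_top h
    _ = 2 * ∑ i, ‖xs i‖ := ENNReal.toReal_ofReal (by linarith [sum_norm_nonneg xs])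

lemma ach_le_ach_union {m : ℕ} (xs : Fin m → CI) (x : CI) :
    ach (⋃ i, graph (xs i)) ≤ ach ((⋃ i, graph (xs i)) ∪ graph x) :=
  ENNReal.toReal_mono (vol_hull_union_ne_top xs x)
    (measure_mono (convexHull_mono Set.subset_union_left))

lemma achRatio_nonneg {m : ℕ} (xs : Fin m → CI) (x : CI) : 0 ≤ achRatio xs x :=
  div_nonneg ENNReal.toReal_nonneg ENNReal.toReal_nonneg

lemma ach_denom_ge {j : ℕ} (hj : 1 ≤ j) (xs : Fin j → CI) (xx : CI)
    (hS : 1 + (∑ i, ‖xs i‖) ≤ ‖xx‖) :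
    (‖xx‖ - 1 - ∑ i, ‖xs i‖) / 4 ≤ ach ((⋃ i, graph (xs i)) ∪ graph xx) := by
  set S := ∑ i, ‖xs i‖ with hSdef
  have hS0 : 0 ≤ S := sum_norm_nonneg xs
  set A := (⋃ i, graph (xs i)) ∪ graph xx with hA
  set C := convexHull ℝ A with hCdef
  have hCc : Convex ℝ C := convex_convexHull ℝ A
  -- points
  set i0 : Fin j := ⟨0, hj⟩ with hi0
  set t0 : I01 := ⟨0, Set.mem_Icc.mpr (by norm_num)⟩ with ht0
  set t1 : I01 := ⟨1, Set.mem_Icc.mpr (by norm_num)⟩ with ht1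
  set a : ℝ := xs i0 t0 with ha
  set b : ℝ := xs i0 t1 with hb
  -- pick t* with large |xx t*|
  have hxx1 : (0:ℝ) ≤ ‖xx‖ - 1 := by linarith
  obtain ⟨ts, hts⟩ : ∃ t : I01, ‖xx‖ - 1 < |xx t| := by
    by_contra hcon
    push_neg at hcon
    have := (xx.norm_le hxx1).mpr (fun t => by
      rw [Real.norm_eq_abs]; exact hcon t)
    linarith
  set u : ℝ := (ts : ℝ) with hu
  have hu0 : 0 ≤ u := ts.2.1
  have hu1 : u ≤ 1 := ts.2.2
  set ℓ : ℝ := (1 - u) * a + u * b with hℓ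
  have hp0 : ((0:ℝ), a) ∈ C := subset_convexHull ℝ A (Or.inl (Set.mem_iUnion.mpr ⟨i0, ⟨t0, rfl⟩⟩))
  have hp1 : ((1:ℝ), b) ∈ C := subset_convexHull ℝ A (Or.inl (Set.mem_iUnion.mpr ⟨i0, ⟨t1, rfl⟩⟩))
  have hq : (u, xx ts) ∈ C := subset_convexHull ℝ A (Or.inr ⟨ts, rfl⟩)
  have hr : (u, ℓ) ∈ C := by
    have hcomb := hCc hp0 hp1 (a := 1 - u) (b := u) (by linarith) hu0 (by ring)
    have heq : (1 - u) • ((0:ℝ), a) + u • ((1:ℝ), b) = (u, ℓ) := by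
      rw [Prod.ext_iff]
      refine ⟨?_, ?_⟩
      · show (1 - u) * 0 + u * 1 = u; ring
      · show (1 - u) * a + u * b = ℓ; rw [hℓ]
    rwa [heq] at hcomb
  -- vertical pair
  have hmin : (u, min (xx ts) ℓ) ∈ C := by
    rcases le_total (xx ts) ℓ with h | h
    · rwa [min_eq_left h]
    · rwa [min_eq_right h]
  have hmax : (u, max (xx ts) ℓ) ∈ C := by
    rcases le_total (xx ts) ℓ with h | h
    · rwa [max_eq_right h]
    · rwa [max_eq_left h]
  -- gap bound
  have habs_a : |a| ≤ S := by
    rw [ha]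
    calc |xs i0 t0| = ‖xs i0 t0‖ := (Real.norm_eq_abs _).symm
      _ ≤ ‖xs i0‖ := (xs i0).norm_coe_le_norm t0
      _ ≤ S := norm_le_sum xs i0
  have habs_b : |b| ≤ S := by
    rw [hb]
    calc |xs i0 t1| = ‖xs i0 t1‖ := (Real.norm_eq_abs _).symm
      _ ≤ ‖xs i0‖ := (xs i0).norm_coe_le_norm t1
      _ ≤ S := norm_le_sum xs i0
  have habs_ℓ : |ℓ| ≤ S := by
    rw [hℓ]
    calc |(1 - u) * a + u * b| ≤ |(1 - u) * a| + |u * b| := abs_add_le _ _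
      _ = (1 - u) * |a| + u * |b| := by
          rw [abs_mul, abs_mul, abs_of_nonneg (by linarith : (0:ℝ) ≤ 1 - u), abs_of_nonneg hu0]
      _ ≤ (1 - u) * S + u * S := by
          apply add_le_add
          · exact mul_le_mul_of_nonneg_left habs_a (by linarith)
          · exact mul_le_mul_of_nonneg_left habs_b hu0
      _ = S := by ring
  have hgap : ‖xx‖ - 1 - S ≤ max (xx ts) ℓ - min (xx ts) ℓ := by
    rw [max_sub_min_eq_abs]
    calc ‖xx‖ - 1 - S ≤ |xx ts| - |ℓ| := by linarith
      _ ≤ |ℓ - xx ts| := by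
          rw [abs_sub_comm]
          exact abs_sub_abs_le_abs_sub _ _
  have hgap0 : (0:ℝ) ≤ ‖xx‖ - 1 - S := by linarith
  -- triangle bound
  have hkey : ENNReal.ofReal ((‖xx‖ - 1 - S) / 4) ≤ volume C := by
    rcases le_or_gt u (1/2) with hc | hc
    · have htri := tri_vol (t₀ := u) (t₁ := 1) (v := b) (by intro h; rw [h] at hc; linarith)
        (min_le_max) hCc hmin hmax hp1
      refine le_trans (ENNReal.ofReal_le_ofReal ?_) htri
      have h12 : (1:ℝ)/2 ≤ |1 - u| := by
        rw [abs_of_nonneg (by linarith)]; linarith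
      nlinarith [hgap, hgap0, min_le_max (a := xx ts) (b := ℓ)]
    · have htri := tri_vol (t₀ := u) (t₁ := 0) (v := a) (by intro h; rw [h] at hc; linarith)
        (min_le_max) hCc hmin hmax hp0
      refine le_trans (ENNReal.ofReal_le_ofReal ?_) htri
      have h12 : (1:ℝ)/2 ≤ |0 - u| := by
        rw [abs_of_nonpos (by linarith)]; linarith
      nlinarith [hgap, hgap0, min_le_max (a := xx ts) (b := ℓ)]
  -- conclude
  have hfin : volume C ≠ ⊤ := vol_hull_union_ne_top xs xx
  calc (‖xx‖ - 1 - S) / 4 = (ENNReal.ofReal ((‖xx‖ - 1 - S) / 4)).toReal :=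
        (ENNReal.toReal_ofReal (by linarith)).symm
    _ ≤ (volume C).toReal := ENNReal.toReal_mono hfin hkey

lemma achRatio_le {j : ℕ} (hj : 1 ≤ j) (xs : Fin j → CI) (xx : CI) :
    achRatio xs xx ≤ if ‖xx‖ ≤ 9 * (∑ i, ‖xs i‖) + 9 then 1
      else 8 * (∑ i, ‖xs i‖) / (‖xx‖ - 1 - ∑ i, ‖xs i‖) := by
  set S := ∑ i, ‖xs i‖ with hSdef
  have hS0 : 0 ≤ S := sum_norm_nonneg xs
  split_ifs with h
  · exact div_le_one_of_le₀ (ach_le_ach_union xs xx) ENNReal.toReal_nonneg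
  · push_neg at h
    have h1 : 1 + S ≤ ‖xx‖ := by linarith
    have hden := ach_denom_ge hj xs xx h1
    have hnum := ach_iUnion_le xs
    have hpos : 0 < (‖xx‖ - 1 - S) / 4 := by linarith
    calc achRatio xs xx ≤ (2 * S) / ((‖xx‖ - 1 - S) / 4) :=
          div_le_div₀ (by linarith) hnum hpos hden
      _ = 8 * S / (‖xx‖ - 1 - S) := by
          rw [div_div_eq_mul_div]
          ring_nf

set_option synthInstance.maxHeartbeats 1000000 in
lemma ACHDepth_tendsto (j : ℕ) (hj : 1 ≤ j) (P : Measure CI) [IsProbabilityMeasure P]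
    (x : ℕ → CI) (hx : Tendsto (fun n => ‖x n‖) atTop atTop) :
    Tendsto (fun n => ACHDepth j P (x n)) atTop (𝓝 0) := by
  haveI hsf : SigmaFinite P := inferInstance
  set μ := Measure.pi fun _ : Fin j => P with hμ
  set S : (Fin j → CI) → ℝ := fun xs => ∑ i, ‖xs i‖ with hSdef
  have hSmeas : Measurable S :=
    Finset.measurable_sum _ fun i _ => (measurable_pi_apply i).norm
  set F : ℕ → (Fin j → CI) → ℝ≥0∞ := fun n xs =>
    ENNReal.ofReal (if ‖x n‖ ≤ 9 * S xs + 9 then 1 else 8 * S xs / (‖x n‖ - 1 - S xs)) with hF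
  have hS0 : ∀ xs, 0 ≤ S xs := fun xs => sum_norm_nonneg xs
  have hFmeas : ∀ n, Measurable (F n) := by
    intro n
    apply Measurable.ennreal_ofReal
    apply Measurable.ite
    · exact measurableSet_le measurable_const ((hSmeas.const_mul 9).add_const 9)
    · exact measurable_const
    · exact (hSmeas.const_mul 8).div (measurable_const.sub hSmeas)
  have hbound : ∀ n, F n ≤ᵐ[μ] fun _ => (1 : ℝ≥0∞) := by
    intro n
    filter_upwards with xs
    rw [hF]
    dsimp only
    split_ifs with h
    · simp
    · push_neg at h
      have hle : 8 * S xs / (‖x n‖ - 1 - S xs) ≤ 1 :=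
        div_le_one_of_le₀ (by linarith [hS0 xs]) (by linarith [hS0 xs])
      calc ENNReal.ofReal (8 * S xs / (‖x n‖ - 1 - S xs)) ≤ ENNReal.ofReal 1 :=
            ENNReal.ofReal_le_ofReal hle
        _ = 1 := ENNReal.ofReal_one
  have hlim : ∀ᵐ xs ∂μ, Tendsto (fun n => F n xs) atTop (𝓝 ((fun _ => (0:ℝ≥0∞)) xs)) := by
    filter_upwards with xs
    have h1 : Tendsto (fun n => ‖x n‖ - 1 - S xs) atTop atTop :=
      (tendsto_atTop_add_const_right atTop (-1 - S xs) hx).congr (fun n => by ring)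
    have h2 : Tendsto (fun n => 8 * S xs / (‖x n‖ - 1 - S xs)) atTop (𝓝 0) :=
      tendsto_const_nhds.div_atTop h1
    have h4 : Tendsto (fun n => ENNReal.ofReal (8 * S xs / (‖x n‖ - 1 - S xs))) atTop (𝓝 0) := by
      rw [← ENNReal.ofReal_zero]
      exact ENNReal.tendsto_ofReal h2
    apply h4.congr'
    filter_upwards [hx.eventually_gt_atTop (9 * S xs + 9)] with n hn
    rw [hF]
    dsimp only
    rw [if_neg (not_le.mpr hn)]
  have hone : (∫⁻ _, (1:ℝ≥0∞) ∂μ) ≠ ⊤ := by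
    rw [lintegral_one, hμ, Measure.pi_univ]
    simp
  have hkey := tendsto_lintegral_of_dominated_convergence (μ := μ)
    (fun _ => (1:ℝ≥0∞)) hFmeas hbound hone hlim
  rw [lintegral_zero] at hkey
  have htoReal : Tendsto (fun n => (∫⁻ xs, F n xs ∂μ).toReal) atTop (𝓝 0) := by
    have := (ENNReal.tendsto_toReal (by simp : (0:ℝ≥0∞) ≠ ⊤)).comp hkey
    exact this
  apply squeeze_zero_norm _ htoReal
  intro n
  have hfinF : (∫⁻ xs, F n xs ∂μ) ≠ ⊤ := by
    refine ne_top_of_le_ne_top hone (lintegral_mono_ae (hbound n))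
  calc ‖ACHDepth j P (x n)‖ = ‖∫ xs, achRatio xs (x n) ∂μ‖ := rfl
    _ ≤ (∫⁻ xs, ENNReal.ofReal ‖achRatio xs (x n)‖ ∂μ).toReal :=
        norm_integral_le_lintegral_norm _
    _ ≤ (∫⁻ xs, F n xs ∂μ).toReal := by
        apply ENNReal.toReal_mono hfinF
        apply lintegral_mono
        intro xs
        show ENNReal.ofReal ‖achRatio xs (x n)‖ ≤
          ENNReal.ofReal (if ‖x n‖ ≤ 9 * S xs + 9 then 1 else 8 * S xs / (‖x n‖ - 1 - S xs))
        rw [Real.norm_eq_abs, abs_of_nonneg (achRatio_nonneg xs (x n))]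
        exact ENNReal.ofReal_le_ofReal (achRatio_le hj xs (x n))

/-- the (average) ACH depth vanishes at infinity. -/
theorem ach_depth_vanishing_at_infinity (J : ℕ) (hJ : 1 ≤ J)
    (P : Measure CI) [IsProbabilityMeasure P]
    (x : ℕ → CI) (hx : Tendsto (fun n => ‖x n‖) atTop atTop) :
    Tendsto (fun n => ACHDepth J P (x n)) atTop (𝓝 0) ∧
    Tendsto (fun n => avgACHDepth J P (x n)) atTop (𝓝 0) := by
  constructor
  · exact ACHDepth_tendsto J hJ P x hx
  · have h : Tendsto (fun n => ∑ j ∈ Finset.Icc 1 J, ACHDepth j P (x n)) atTop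
        (𝓝 (∑ j ∈ Finset.Icc 1 J, (0:ℝ))) :=
      tendsto_finset_sum _ fun j hjm => ACHDepth_tendsto j (Finset.mem_Icc.mp hjm).1 P x hx
    have h2 := h.const_mul ((J : ℝ)⁻¹)
    simpa [avgACHDepth] using h2
end
end

section
/- Let j ≥ 1 and x_1, …, x_j ∈ C([0,1]) be fixed. If (z_n) is a sequence in C([0,1]) with ‖z_n‖_∞ → ∞, then λ(conv(graph({x_1, …, x_j, z_n}))) → ∞ as n → ∞. In particular, the ratio λ(conv(graph({x_1, …, x_j}))) / λ(conv(graph({x_1, …, x_j, z_n}))) converges to 0 (with the convention that a ratio with zero denominator equals 0). -/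
open MeasureTheory Filter Topology
open scoped ENNReal

noncomputable section

lemma graph_compact (x : CI) : IsCompact (graph x) :=
  isCompact_range (Continuous.prodMk continuous_subtype_val x.continuous)

lemma ach_lower {j : ℕ} (hj : 1 ≤ j) (xs : Fin j → CI) (z : CI) :
    (‖z‖ - 3 * ‖xs ⟨0, hj⟩‖) / 16 ≤ ach ((⋃ i, graph (xs i)) ∪ graph z) := by
  set x : CI := xs ⟨0, hj⟩ with hx
  -- point where |z| attains its norm
  obtain ⟨t, -, ht⟩ := (isCompact_univ : IsCompact (Set.univ : Set I01)).exists_isMaxOn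
    Set.univ_nonempty ((continuous_abs.comp z.continuous).continuousOn)
  have hzt : ‖z‖ ≤ |z t| := by
    apply (ContinuousMap.norm_le _ (abs_nonneg _)).2
    intro s; simpa using ht (Set.mem_univ s)
  set p₀ : ℝ × ℝ := ((0:ℝ), x ⟨0, by norm_num⟩) with hp₀
  set p₁ : ℝ × ℝ := ((1:ℝ), x ⟨1, by norm_num⟩) with hp₁
  set p₂ : ℝ × ℝ := ((t:ℝ), z t) with hp₂
  set S : Set (ℝ × ℝ) := (⋃ i, graph (xs i)) ∪ graph z with hS
  have hmem₀ : p₀ ∈ S := Or.inl (Set.mem_iUnion.2 ⟨⟨0, hj⟩, ⟨⟨0, by norm_num⟩, rfl⟩⟩)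
  have hmem₁ : p₁ ∈ S := Or.inl (Set.mem_iUnion.2 ⟨⟨0, hj⟩, ⟨⟨1, by norm_num⟩, rfl⟩⟩)
  have hmem₂ : p₂ ∈ S := Or.inr ⟨t, rfl⟩
  set u : ℝ × ℝ := p₁ - p₀ with hu
  set v : ℝ × ℝ := p₂ - p₀ with hv
  set L : (ℝ×ℝ) →ₗ[ℝ] (ℝ×ℝ) :=
    (LinearMap.fst ℝ ℝ ℝ).smulRight u + (LinearMap.snd ℝ ℝ ℝ).smulRight v with hL
  have hdet : L.det = u.1 * v.2 - v.1 * u.2 := by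
    rw [← LinearMap.det_toMatrix (Module.Basis.finTwoProd ℝ), Matrix.det_fin_two]
    simp [LinearMap.toMatrix_apply, hL, Module.Basis.finTwoProd_zero, Module.Basis.finTwoProd_one,
      Module.Basis.coe_finTwoProd_repr]
  set H : Set (ℝ × ℝ) := convexHull ℝ S with hH
  have hconv : Convex ℝ H := convex_convexHull ℝ S
  have h₀ : p₀ ∈ H := subset_convexHull ℝ S hmem₀
  have h₁ : p₁ ∈ H := subset_convexHull ℝ S hmem₁
  have h₂ : p₂ ∈ H := subset_convexHull ℝ S hmem₂
  -- the image of the small square is in H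
  have hsub : (fun w => p₀ + L w) '' Set.Icc ((0:ℝ),(0:ℝ)) ((4:ℝ)⁻¹,(4:ℝ)⁻¹) ⊆ H := by
    rintro - ⟨⟨a, b⟩, ⟨⟨ha0, hb0⟩, ⟨ha1, hb1⟩⟩, rfl⟩
    have hb' : (1:ℝ) - b ≠ 0 := by norm_num at hb1 ⊢; linarith
    have hb'' : (0:ℝ) < 1 - b := by norm_num at hb1 ⊢; linarith
    have hq : (a / (1 - b)) • p₁ + (1 - a / (1 - b)) • p₀ ∈ H := by
      apply hconv h₁ h₀ (by positivity)
      · rw [sub_nonneg, div_le_one hb'']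
        norm_num at ha1 hb1 ⊢; linarith
      · ring
    have := hconv hq h₂ (le_of_lt hb'') hb0 (by ring)
    convert this using 1
    simp only [hL, LinearMap.add_apply, LinearMap.smulRight_apply, LinearMap.fst_apply,
      LinearMap.snd_apply, hu, hv, smul_add, smul_smul]
    ext <;> simp [Prod.smul_def] <;> field_simp <;> ring
  -- measure computation
  have himg : volume ((fun w => p₀ + L w) '' Set.Icc ((0:ℝ),(0:ℝ)) ((4:ℝ)⁻¹,(4:ℝ)⁻¹))
      = ENNReal.ofReal |L.det| * ENNReal.ofReal (16⁻¹) := by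
    have h1 : (fun w => p₀ + L w) '' Set.Icc ((0:ℝ),(0:ℝ)) ((4:ℝ)⁻¹,(4:ℝ)⁻¹)
        = (p₀ + ·) '' (⇑L '' Set.Icc ((0:ℝ),(0:ℝ)) ((4:ℝ)⁻¹,(4:ℝ)⁻¹)) := by
      rw [Set.image_image]
    rw [h1, Set.image_add_left, measure_preimage_add, Measure.addHaar_image_linearMap]
    congr 1
    rw [← Set.Icc_prod_Icc, Measure.volume_eq_prod, Measure.prod_prod, Real.volume_Icc,
      ← ENNReal.ofReal_mul (by norm_num)]
    norm_num
  have hHfin : volume H ≠ ⊤ := by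
    have hcS : IsCompact S := by
      apply IsCompact.union _ (graph_compact z)
      exact isCompact_iUnion (fun i => graph_compact (xs i))
    exact ((isBounded_convexHull.2 hcS.isBounded).measure_lt_top).ne
  have hle : ENNReal.ofReal (|L.det| * 16⁻¹) ≤ volume H := by
    rw [ENNReal.ofReal_mul (abs_nonneg _), ← himg]
    exact measure_mono hsub
  have h2 : |L.det| * 16⁻¹ ≤ ach S := by
    have := ENNReal.toReal_mono hHfin hle
    rwa [ENNReal.toReal_ofReal (by positivity)] at this
  refine le_trans ?_ h2
  -- |det| ≥ ‖z‖ - 3‖x‖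
  have ha : |x ⟨0, by norm_num⟩| ≤ ‖x‖ := by
    simpa using x.norm_coe_le_norm ⟨0, by norm_num⟩
  have hb2 : |x ⟨1, by norm_num⟩| ≤ ‖x‖ := by
    simpa using x.norm_coe_le_norm ⟨1, by norm_num⟩
  have hdet2 : ‖z‖ - 3 * ‖x‖ ≤ |L.det| := by
    rw [hdet]
    have hu1 : u.1 = 1 := by simp [hu, hp₀, hp₁]
    have hu2 : u.2 = x ⟨1, by norm_num⟩ - x ⟨0, by norm_num⟩ := by simp [hu, hp₀, hp₁]
    have hv1 : v.1 = (t:ℝ) := by simp [hv, hp₀, hp₂]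
    have hv2 : v.2 = z t - x ⟨0, by norm_num⟩ := by simp [hv, hp₀, hp₂]
    rw [hu1, hu2, hv1, hv2]
    have ht0 : (0:ℝ) ≤ (t:ℝ) := t.2.1
    have ht1 : (t:ℝ) ≤ 1 := t.2.2
    set a0 : ℝ := x ⟨0, by norm_num⟩
    set a1 : ℝ := x ⟨1, by norm_num⟩
    have k1 : |z t| - |a0| ≤ |z t - a0| := abs_sub_abs_le_abs_sub _ _
    have k2 : |(t:ℝ) * (a1 - a0)| ≤ |a1| + |a0| := by
      rw [abs_mul, abs_of_nonneg ht0]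
      have h3 : |a1 - a0| ≤ |a1| + |a0| := abs_sub _ _
      nlinarith [abs_nonneg (a1 - a0)]
    have k3 : |z t - a0| - |(t:ℝ) * (a1 - a0)| ≤ |1 * (z t - a0) - (t:ℝ) * (a1 - a0)| := by
      rw [one_mul]; exact abs_sub_abs_le_abs_sub _ _
    linarith
  linarith [hdet2]

/-- for fixed curves `x₁, …, x_j`, as `‖z_n‖_∞ → ∞` the area of the convex hull of
the graphs together with `z_n` tends to infinity, and the corresponding ratio tends to `0`. -/
theorem ach_tendsto_atTop_of_norm_tendsto_atTop (j : ℕ) (hj : 1 ≤ j) (xs : Fin j → CI)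
    (z : ℕ → CI) (hz : Tendsto (fun n => ‖z n‖) atTop atTop) :
    Tendsto (fun n => ach ((⋃ i, graph (xs i)) ∪ graph (z n))) atTop atTop ∧
    Tendsto (fun n => ach (⋃ i, graph (xs i)) / ach ((⋃ i, graph (xs i)) ∪ graph (z n)))
      atTop (𝓝 0) := by
  have h1 : Tendsto (fun n => ach ((⋃ i, graph (xs i)) ∪ graph (z n))) atTop atTop := by
    apply tendsto_atTop_mono (fun n => ach_lower hj xs (z n))
    apply Tendsto.atTop_div_const (by norm_num : (0:ℝ) < 16)
    exact tendsto_atTop_add_const_right _ _ hz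
  exact ⟨h1, Tendsto.div_atTop tendsto_const_nhds h1⟩


end
end

section
/- Let j ≥ 1 and x_1, …, x_j ∈ C([0,1]) be fixed. For all x, x₀ ∈ C([0,1]), d_H(Band(x_1, …, x_j, x), Band(x_1, …, x_j, x₀)) ≤ ‖x − x₀‖_∞, where d_H is the Hausdorff distance on nonempty compact subsets of ℝ² induced by the maximum metric d((s,u),(t,v)) = max(|s−t|, |u−v|). In particular, the map x ↦ Band(x_1, …, x_j, x) from (C([0,1]), ‖·‖_∞) to the space of nonempty compact subsets of ℝ² equipped with d_H is 1-Lipschitz, hence continuous. -/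
open MeasureTheory Filter Topology
open scoped ENNReal

noncomputable section

lemma band_key (j : ℕ) (xs : Fin j → CI) (x x₀ : CI) :
    ∀ p ∈ band (Fin.snoc xs x), ∃ q ∈ band (Fin.snoc xs x₀), dist p q ≤ ‖x - x₀‖ := by
  intro p hp
  obtain ⟨t, ht, hL, hU⟩ := hp
  set ε := ‖x - x₀‖ with hε
  have hε0 : 0 ≤ ε := norm_nonneg _
  have hpt : ∀ i : Fin (j + 1), |(Fin.snoc xs x : Fin (j+1) → CI) i t - (Fin.snoc xs x₀ : Fin (j+1) → CI) i t| ≤ ε := by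
    intro i
    refine Fin.lastCases ?_ ?_ i
    · simp only [Fin.snoc_last]
      have := (x - x₀).norm_coe_le_norm t
      simpa [Real.norm_eq_abs] using this
    · intro k
      simp [Fin.snoc_castSucc, hε0]
  set L₀ := ⨅ i, (Fin.snoc xs x₀ : Fin (j+1) → CI) i t with hL₀
  set U₀ := ⨆ i, (Fin.snoc xs x₀ : Fin (j+1) → CI) i t with hU₀
  have hbd0a : BddAbove (Set.range fun i => (Fin.snoc xs x₀ : Fin (j+1) → CI) i t) :=
    (Set.finite_range _).bddAbove
  have hbd0b : BddBelow (Set.range fun i => (Fin.snoc xs x₀ : Fin (j+1) → CI) i t) :=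
    (Set.finite_range _).bddBelow
  have hbda : BddAbove (Set.range fun i => (Fin.snoc xs x : Fin (j+1) → CI) i t) :=
    (Set.finite_range _).bddAbove
  have hbdb : BddBelow (Set.range fun i => (Fin.snoc xs x : Fin (j+1) → CI) i t) :=
    (Set.finite_range _).bddBelow
  have hLU0 : L₀ ≤ U₀ := le_trans (ciInf_le hbd0b 0) (le_ciSup hbd0a 0)
  -- p.2 ≤ U₀ + ε
  have hU' : p.2 ≤ U₀ + ε := by
    refine le_trans hU (ciSup_le fun i => ?_)
    have h1 := hpt i
    have h2 : (Fin.snoc xs x₀ : Fin (j+1) → CI) i t ≤ U₀ := le_ciSup hbd0a i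
    have := abs_le.mp h1
    linarith [this.2]
  have hL' : L₀ - ε ≤ p.2 := by
    refine le_trans (le_ciInf fun i => ?_) hL
    have h1 := hpt i
    have h2 : L₀ ≤ (Fin.snoc xs x₀ : Fin (j+1) → CI) i t := ciInf_le hbd0b i
    have := abs_le.mp h1
    linarith [this.1]
  set y' := max L₀ (min U₀ p.2) with hy'
  refine ⟨((t : ℝ), y'), ⟨t, rfl, le_max_left _ _, max_le hLU0 (min_le_left _ _)⟩, ?_⟩
  have h1' : p.2 - ε ≤ min U₀ p.2 := le_min (by linarith) (by linarith)
  have hylo : p.2 - ε ≤ y' := le_trans h1' (le_max_right _ _)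
  have hyhi : y' ≤ p.2 + ε :=
    max_le (by linarith) (le_trans (min_le_right _ _) (by linarith))
  have habs : |p.2 - y'| ≤ ε := abs_sub_le_iff.mpr ⟨by linarith, by linarith⟩
  have : dist p ((t : ℝ), y') = max (dist p.1 (t : ℝ)) (dist p.2 y') := Prod.dist_eq
  rw [this, ht]
  simp only [dist_self, Real.dist_eq]
  exact max_le hε0 habs

/-- the band map is `1`-Lipschitz for the Hausdorff distance (induced on subsets
of `ℝ²` by the maximum metric, the product metric on `ℝ × ℝ`):
`d_H(Band(x₁,…,x_j,x), Band(x₁,…,x_j,x₀)) ≤ ‖x − x₀‖_∞`. -/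
theorem band_hausdorffDist_le (j : ℕ) (hj : 1 ≤ j) (xs : Fin j → CI) :
    ∀ x x₀ : CI,
      Metric.hausdorffDist (band (Fin.snoc xs x)) (band (Fin.snoc xs x₀)) ≤ ‖x - x₀‖ := by
  intro x x₀
  refine Metric.hausdorffDist_le_of_mem_dist (norm_nonneg _) (band_key j xs x x₀) ?_
  have h := band_key j xs x₀ x
  rw [show ‖x₀ - x‖ = ‖x - x₀‖ from norm_sub_rev _ _] at h
  exact h

end
end

section
/- Define y_1 ∈ C([0,1]) by y_1(t) = −2t+1 for t ∈ [0,1/4], y_1(t) = 2t for t ∈ [1/4,1/2], y_1(t) = −2t+2 for t ∈ [1/2,3/4], and y_1(t) = 2t−1 for t ∈ [3/4,1]; let y_2 = −y_1, and let P = (1/2)δ_{y_1} + (1/2)δ_{y_2}. Then P is centrally symmetric about the constant function θ ≡ 0 (i.e., the pushforward of P under f ↦ −f equals P), D̄_2(θ, P) = 17/32, and D̄_2(θ, P) < D̄_2(y_1, P). In particular, the average ACH depth does not satisfy the 'maximality at the center' property. -/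
open MeasureTheory Filter Topology
open scoped ENNReal

noncomputable section

namespace ACHAux
open Set

def gfun (t : ℝ) : ℝ := max (max (1 - 2*t) (2*t - 1)) (1/2)

def Ttrap : Set (ℝ × ℝ) := {p : ℝ × ℝ | gfun p.1 ≤ p.2 ∧ p.2 ≤ 1}

lemma gfun_cont : Continuous gfun := by
  unfold gfun; fun_prop

lemma gfun_ge1 (t : ℝ) : 1 - 2*t ≤ gfun t :=
  le_trans (le_max_left _ _) (le_max_left _ _)

lemma gfun_ge2 (t : ℝ) : 2*t - 1 ≤ gfun t :=
  le_trans (le_max_right _ _) (le_max_left _ _)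

lemma gfun_ge3 (t : ℝ) : 1/2 ≤ gfun t := le_max_right _ _

lemma gfun_le {t : ℝ} (h0 : 0 ≤ t) (h1 : t ≤ 1) : gfun t ≤ 1 :=
  max_le (max_le (by linarith) (by linarith)) (by norm_num)

lemma gfun_eq1 {t : ℝ} (h : t ≤ 1/4) : gfun t = 1 - 2*t := by
  unfold gfun
  rw [max_eq_left (by linarith : 2*t - 1 ≤ 1 - 2*t), max_eq_left (by linarith : 1/2 ≤ 1 - 2*t)]

lemma gfun_eq2 {t : ℝ} (h : 1/4 ≤ t) (h' : t ≤ 3/4) : gfun t = 1/2 := by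
  unfold gfun
  rw [max_eq_right (max_le (by linarith) (by linarith))]

lemma gfun_eq3 {t : ℝ} (h : 3/4 ≤ t) : gfun t = 2*t - 1 := by
  unfold gfun
  rw [max_eq_right (by linarith : 1 - 2*t ≤ 2*t - 1), max_eq_left (by linarith : 1/2 ≤ 2*t - 1)]

lemma convex_Ttrap : Convex ℝ Ttrap := by
  rintro p ⟨hp1, hp2⟩ q ⟨hq1, hq2⟩ a b ha hb hab
  have hp3 : 1 - 2*p.1 ≤ p.2 := le_trans (gfun_ge1 _) hp1
  have hp4 : 2*p.1 - 1 ≤ p.2 := le_trans (gfun_ge2 _) hp1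
  have hp5 : (1:ℝ)/2 ≤ p.2 := le_trans (gfun_ge3 _) hp1
  have hq3 : 1 - 2*q.1 ≤ q.2 := le_trans (gfun_ge1 _) hq1
  have hq4 : 2*q.1 - 1 ≤ q.2 := le_trans (gfun_ge2 _) hq1
  have hq5 : (1:ℝ)/2 ≤ q.2 := le_trans (gfun_ge3 _) hq1
  have e1 : (a • p + b • q).1 = a * p.1 + b * q.1 := rfl
  have e2 : (a • p + b • q).2 = a * p.2 + b * q.2 := rfl
  constructor
  · show gfun (a • p + b • q).1 ≤ (a • p + b • q).2
    rw [e1, e2]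
    unfold gfun
    refine max_le (max_le ?_ ?_) ?_ <;>
      nlinarith [mul_le_mul_of_nonneg_left hp3 ha, mul_le_mul_of_nonneg_left hq3 hb,
        mul_le_mul_of_nonneg_left hp4 ha, mul_le_mul_of_nonneg_left hq4 hb,
        mul_le_mul_of_nonneg_left hp5 ha, mul_le_mul_of_nonneg_left hq5 hb]
  · show (a • p + b • q).2 ≤ 1
    rw [e2]
    nlinarith [mul_le_mul_of_nonneg_left hp2 ha, mul_le_mul_of_nonneg_left hq2 hb]

lemma isClosed_Ttrap : IsClosed Ttrap := by
  have h : Ttrap = {p : ℝ × ℝ | gfun p.1 ≤ p.2} ∩ {p : ℝ × ℝ | p.2 ≤ 1} := rfl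
  rw [h]
  exact (isClosed_le (gfun_cont.comp continuous_fst) continuous_snd).inter
    (isClosed_le continuous_snd continuous_const)

lemma slice_Ttrap (t : ℝ) : Prod.mk t ⁻¹' Ttrap = Icc (gfun t) 1 := rfl

lemma integral_gfun : ∫ t in Icc (0:ℝ) 1, (1 - gfun t) = 3/8 := by
  have hcont : Continuous (fun t : ℝ => 1 - gfun t) := continuous_const.sub gfun_cont
  have hI : ∀ a b : ℝ, IntervalIntegrable (fun t : ℝ => 1 - gfun t) volume a b :=
    fun a b => hcont.intervalIntegrable a b
  rw [MeasureTheory.integral_Icc_eq_integral_Ioc,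
      ← intervalIntegral.integral_of_le (by norm_num : (0:ℝ) ≤ 1)]
  rw [← intervalIntegral.integral_add_adjacent_intervals (hI 0 (1/4)) (hI (1/4) 1),
      ← intervalIntegral.integral_add_adjacent_intervals (hI (1/4) (3/4)) (hI (3/4) 1)]
  have e1 : (∫ t in (0:ℝ)..(1/4), (1 - gfun t)) = 1/16 := by
    rw [intervalIntegral.integral_congr (g := fun t : ℝ => 2 * t) ?_]
    · rw [intervalIntegral.integral_const_mul, integral_id]; norm_num
    · intro t ht
      rw [Set.uIcc_of_le (by norm_num : (0:ℝ) ≤ 1/4)] at ht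
      show 1 - gfun t = 2 * t
      rw [gfun_eq1 ht.2]; ring
  have e2 : (∫ t in (1/4:ℝ)..(3/4), (1 - gfun t)) = 1/4 := by
    rw [intervalIntegral.integral_congr (g := fun _ : ℝ => (1:ℝ)/2) ?_]
    · rw [intervalIntegral.integral_const]; norm_num
    · intro t ht
      rw [Set.uIcc_of_le (by norm_num : (1/4:ℝ) ≤ 3/4)] at ht
      show 1 - gfun t = 1/2
      rw [gfun_eq2 ht.1 ht.2]; norm_num
  have e3 : (∫ t in (3/4:ℝ)..(1:ℝ), (1 - gfun t)) = 1/16 := by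
    rw [intervalIntegral.integral_congr (g := fun t : ℝ => 2 - 2 * t) ?_]
    · rw [intervalIntegral.integral_sub (g := fun t : ℝ => 2 * t) (intervalIntegrable_const)
        ((continuous_const.mul continuous_id' : Continuous fun t : ℝ => 2 * t).intervalIntegrable _ _),
        intervalIntegral.integral_const, intervalIntegral.integral_const_mul,
        integral_id]
      norm_num
    · intro t ht
      rw [Set.uIcc_of_le (by norm_num : (3/4:ℝ) ≤ 1)] at ht
      show 1 - gfun t = 2 - 2 * t
      rw [gfun_eq3 ht.1]; ring
  rw [e1, e2, e3]; norm_num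

lemma volume_Ttrap : volume Ttrap = ENNReal.ofReal (3/8) := by
  rw [Measure.volume_eq_prod, Measure.prod_apply isClosed_Ttrap.measurableSet]
  have h1 : ∀ t : ℝ, volume (Prod.mk t ⁻¹' Ttrap) = ENNReal.ofReal (1 - gfun t) := by
    intro t; rw [slice_Ttrap, Real.volume_Icc]
  simp_rw [h1]
  have h2 : (fun t : ℝ => ENNReal.ofReal (1 - gfun t)) =
      (Icc (0:ℝ) 1).indicator (fun t => ENNReal.ofReal (1 - gfun t)) := by
    funext t
    by_cases ht : t ∈ Icc (0:ℝ) 1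
    · rw [Set.indicator_of_mem ht]
    · rw [Set.indicator_of_notMem ht]
      rw [Set.mem_Icc, not_and_or, not_le, not_le] at ht
      refine ENNReal.ofReal_eq_zero.2 ?_
      rcases ht with ht | ht
      · have := gfun_ge1 t; linarith
      · have := gfun_ge2 t; linarith
  rw [lintegral_congr fun t => congrFun h2 t, lintegral_indicator measurableSet_Icc _]
  rw [← MeasureTheory.ofReal_integral_eq_lintegral_ofReal (f := fun t : ℝ => 1 - gfun t)
        ((continuous_const.sub gfun_cont : Continuous fun t : ℝ => 1 - gfun t).integrableOn_Icc)
        ((ae_restrict_iff' measurableSet_Icc).2 (ae_of_all _ fun t ht => by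
          have := gfun_le ht.1 ht.2; simp only [Pi.zero_apply]; linarith))]
  rw [integral_gfun]


lemma combo2 {H : Set (ℝ × ℝ)} (hH : Convex ℝ H) {x1 x2 y1 y2 p1 p2 θ : ℝ}
    (hx : ((x1, x2) : ℝ × ℝ) ∈ H) (hy : ((y1, y2) : ℝ × ℝ) ∈ H) (h0 : 0 ≤ θ) (h1 : θ ≤ 1)
    (e1 : p1 = (1-θ)*x1 + θ*y1) (e2 : p2 = (1-θ)*x2 + θ*y2) : ((p1, p2) : ℝ × ℝ) ∈ H := by
  have h := hH hx hy (by linarith : (0:ℝ) ≤ 1 - θ) h0 (by ring)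
  have he : ((1-θ) • ((x1,x2) : ℝ×ℝ) + θ • ((y1,y2) : ℝ×ℝ)) = ((p1, p2) : ℝ×ℝ) := by
    simp only [Prod.smul_mk, Prod.mk_add_mk, smul_eq_mul, Prod.mk.injEq]
    exact ⟨e1.symm, e2.symm⟩
  rwa [he] at h

lemma vertseg {H : Set (ℝ × ℝ)} (hH : Convex ℝ H) {t a b u : ℝ}
    (ha : ((t, a) : ℝ × ℝ) ∈ H) (hb : ((t, b) : ℝ × ℝ) ∈ H) (h1 : a ≤ u) (h2 : u ≤ b) :
    ((t, u) : ℝ × ℝ) ∈ H := by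
  rcases eq_or_lt_of_le (h1.trans h2) with heq | hlt
  · obtain rfl : a = u := le_antisymm h1 (heq ▸ h2)
    exact ha
  · have hba : b - a ≠ 0 := by linarith
    exact combo2 hH ha hb (θ := (u-a)/(b-a)) (div_nonneg (by linarith) (by linarith))
      ((div_le_one (by linarith)).2 (by linarith)) (by ring) (by field_simp; ring)

def mneg : ℝ × ℝ → ℝ × ℝ := fun p => (p.1, -p.2)

lemma mneg_measurePreserving : MeasurePreserving mneg (volume : Measure (ℝ×ℝ)) volume := by
  rw [Measure.volume_eq_prod]
  exact (MeasurePreserving.id volume).prod (Measure.measurePreserving_neg volume)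

lemma mneg_image_volume {S : Set (ℝ×ℝ)} (hS : MeasurableSet S) :
    volume (mneg '' S) = volume S := by
  have hinv : Function.LeftInverse mneg mneg := fun p => by simp [mneg]
  have himg : mneg '' S = mneg ⁻¹' S :=
    congrFun (Set.image_eq_preimage_of_inverse hinv hinv) S
  rw [himg, mneg_measurePreserving.measure_preimage hS.nullMeasurableSet]

lemma mneg_linear : IsLinearMap ℝ mneg := by
  constructor
  · intro p q; simp [mneg, Prod.ext_iff, add_comm]
  · intro c p; simp [mneg, Prod.ext_iff, smul_eq_mul]

lemma mneg_hull (S : Set (ℝ×ℝ)) : convexHull ℝ (mneg '' S) = mneg '' (convexHull ℝ S) :=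
  (mneg_linear.image_convexHull S).symm

lemma vol_rect (a b : ℝ) : volume (Set.Icc (0:ℝ) 1 ×ˢ Set.Icc a b) = ENNReal.ofReal (b - a) := by
  rw [Measure.volume_eq_prod, Measure.prod_prod, Real.volume_Icc, Real.volume_Icc]
  norm_num

lemma integrable_dirac'' {α : Type*} [MeasurableSpace α] [MeasurableSingletonClass α]
    (f : α → ℝ) (a : α) : Integrable f (Measure.dirac a) := by
  have h : f =ᵐ[Measure.dirac a] fun _ => f a := by
    rw [ae_dirac_eq]; exact Filter.eventually_pure.2 rfl
  exact (integrable_const (f a)).congr h.symm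

lemma integral_two_dirac {α : Type*} [MeasurableSpace α] [MeasurableSingletonClass α]
    (f : α → ℝ) (p q : α) :
    ∫ x, f x ∂((1/2 : ℝ≥0∞) • Measure.dirac p + (1/2 : ℝ≥0∞) • Measure.dirac q)
      = (f p + f q) / 2 := by
  rw [integral_add_measure ((integrable_dirac'' f p).smul_measure (by norm_num))
        ((integrable_dirac'' f q).smul_measure (by norm_num)),
      integral_smul_measure, integral_smul_measure, integral_dirac, integral_dirac]
  simp only [smul_eq_mul, ENNReal.toReal_div, ENNReal.toReal_one, ENNReal.toReal_ofNat]
  ring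

lemma integral_four_dirac {α : Type*} [MeasurableSpace α] [MeasurableSingletonClass α]
    (f : α → ℝ) (a b c d : α) :
    ∫ x, f x ∂((1/4 : ℝ≥0∞) • Measure.dirac a + (1/4 : ℝ≥0∞) • Measure.dirac b
        + (1/4 : ℝ≥0∞) • Measure.dirac c + (1/4 : ℝ≥0∞) • Measure.dirac d)
      = (f a + f b + f c + f d) / 4 := by
  have h : ∀ x : α, Integrable f ((1/4 : ℝ≥0∞) • Measure.dirac x) :=
    fun x => (integrable_dirac'' f x).smul_measure (by norm_num)
  rw [integral_add_measure (((h a).add_measure (h b)).add_measure (h c)) (h d),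
      integral_add_measure ((h a).add_measure (h b)) (h c),
      integral_add_measure (h a) (h b),
      integral_smul_measure, integral_smul_measure, integral_smul_measure,
      integral_smul_measure, integral_dirac, integral_dirac, integral_dirac, integral_dirac]
  simp only [smul_eq_mul, ENNReal.toReal_div, ENNReal.toReal_one, ENNReal.toReal_ofNat]
  ring

lemma isFiniteMeasure_two {α : Type*} [MeasurableSpace α] (p q : α) :
    IsFiniteMeasure ((1/2 : ℝ≥0∞) • Measure.dirac p + (1/2 : ℝ≥0∞) • Measure.dirac q) := by
  constructor
  simp only [Measure.add_apply, Measure.smul_apply, smul_eq_mul, measure_univ, mul_one]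
  rw [ENNReal.add_halves]
  exact ENNReal.one_lt_top

lemma pi_fin_one {α : Type*} [MeasurableSpace α] (P : Measure α) (p q : α)
    (hP : P = (1/2 : ℝ≥0∞) • Measure.dirac p + (1/2 : ℝ≥0∞) • Measure.dirac q) :
    Measure.pi (fun _ : Fin 1 => P)
      = (1/2 : ℝ≥0∞) • Measure.dirac ![p] + (1/2 : ℝ≥0∞) • Measure.dirac ![q] := by
  haveI : IsFiniteMeasure P := hP ▸ isFiniteMeasure_two p q
  refine Measure.pi_eq fun s hs => ?_
  have hpi : MeasurableSet (Set.pi Set.univ s) := MeasurableSet.univ_pi hs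
  have hmem : ∀ x : α, ((![x] : Fin 1 → α) ∈ Set.pi Set.univ s) ↔ x ∈ s 0 := by
    intro x; simp [Set.mem_univ_pi, Fin.forall_fin_one]
  rw [Fin.prod_univ_one, hP]
  by_cases hp0 : p ∈ s 0 <;> by_cases hq0 : q ∈ s 0 <;>
    simp [Measure.add_apply, Measure.smul_apply, smul_eq_mul,
      Measure.dirac_apply' _ hpi, Measure.dirac_apply' _ (hs 0),
      Set.indicator, hmem, hp0, hq0]

lemma pi_fin_two {α : Type*} [MeasurableSpace α] (P : Measure α) (p q : α)
    (hP : P = (1/2 : ℝ≥0∞) • Measure.dirac p + (1/2 : ℝ≥0∞) • Measure.dirac q) :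
    Measure.pi (fun _ : Fin 2 => P)
      = (1/4 : ℝ≥0∞) • Measure.dirac ![p, p] + (1/4 : ℝ≥0∞) • Measure.dirac ![p, q]
        + (1/4 : ℝ≥0∞) • Measure.dirac ![q, p] + (1/4 : ℝ≥0∞) • Measure.dirac ![q, q] := by
  haveI : IsFiniteMeasure P := hP ▸ isFiniteMeasure_two p q
  refine Measure.pi_eq fun s hs => ?_
  have hpi : MeasurableSet (Set.pi Set.univ s) := MeasurableSet.univ_pi hs
  have hmem : ∀ x y : α, ((![x, y] : Fin 2 → α) ∈ Set.pi Set.univ s) ↔ (x ∈ s 0 ∧ y ∈ s 1) := by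
    intro x y; simp [Set.mem_univ_pi, Fin.forall_fin_two]
  have quarter : (4⁻¹ : ℝ≥0∞) = 2⁻¹ * 2⁻¹ := by
    rw [show (4:ℝ≥0∞) = 2*2 by norm_num, ENNReal.mul_inv (by norm_num) (by norm_num)]
  rw [Fin.prod_univ_two, hP]
  by_cases hp0 : p ∈ s 0 <;> by_cases hp1 : p ∈ s 1 <;>
    by_cases hq0 : q ∈ s 0 <;> by_cases hq1 : q ∈ s 1 <;>
    · simp only [Measure.add_apply, Measure.smul_apply, smul_eq_mul,
        Measure.dirac_apply' _ hpi, Measure.dirac_apply' _ (hs 0), Measure.dirac_apply' _ (hs 1),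
        Set.indicator, Pi.one_apply, hmem, hp0, hp1, hq0, hq1, if_true, if_false,
        and_true, and_false, true_and, false_and, one_div]
      simp only [quarter]
      ring
end ACHAux

namespace ACHAux

lemma iU1 (a : CI) : (⋃ i, graph (![a] i)) = graph a := by
  ext p; simp [Fin.exists_fin_one]

lemma iU2 (a b : CI) : (⋃ i, graph (![a, b] i)) = graph a ∪ graph b := by
  ext p; simp [Fin.exists_fin_two, Set.mem_union]

lemma achRatio_one (a x : CI) :
    achRatio ![a] x = ach (graph a) / ach (graph a ∪ graph x) := by
  rw [achRatio, iU1]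

lemma achRatio_two (a b x : CI) :
    achRatio ![a, b] x = ach (graph a ∪ graph b) / ach ((graph a ∪ graph b) ∪ graph x) := by
  rw [achRatio, iU2]

lemma ACHDepth_one {P : Measure CI} {p q : CI}
    (hP : P = (1/2 : ℝ≥0∞) • Measure.dirac p + (1/2 : ℝ≥0∞) • Measure.dirac q) (x : CI) :
    ACHDepth 1 P x = (achRatio ![p] x + achRatio ![q] x) / 2 := by
  rw [ACHDepth, pi_fin_one P p q hP, integral_two_dirac]

lemma ACHDepth_two {P : Measure CI} {p q : CI}
    (hP : P = (1/2 : ℝ≥0∞) • Measure.dirac p + (1/2 : ℝ≥0∞) • Measure.dirac q) (x : CI) :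
    ACHDepth 2 P x = (achRatio ![p, p] x + achRatio ![p, q] x
      + achRatio ![q, p] x + achRatio ![q, q] x) / 4 := by
  rw [ACHDepth, pi_fin_two P p q hP, integral_four_dirac]

lemma avg_two {P : Measure CI} (x : CI) :
    avgACHDepth 2 P x = (2:ℝ)⁻¹ * (ACHDepth 1 P x + ACHDepth 2 P x) := by
  rw [avgACHDepth, show (Finset.Icc 1 2 : Finset ℕ) = {1, 2} by decide,
      Finset.sum_pair (by norm_num : (1:ℕ) ≠ 2)]
  norm_num

end ACHAux

open ACHAux

set_option maxHeartbeats 1000000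

/-- counterexample to 'maximality at the center'. With `y₁` the piecewise
linear zigzag described below, `y₂ = −y₁` and `P = (1/2)δ_{y₁} + (1/2)δ_{y₂}`, the measure `P`
is centrally symmetric about `θ ≡ 0`, yet `D̄₂(θ,P) = 17/32 < D̄₂(y₁,P)`. -/
theorem ach_depth_not_maximal_at_center (y₁ : CI)
    (h1 : ∀ s : I01, (s : ℝ) ≤ 1/4 → y₁ s = -2 * (s : ℝ) + 1)
    (h2 : ∀ s : I01, 1/4 ≤ (s : ℝ) → (s : ℝ) ≤ 1/2 → y₁ s = 2 * (s : ℝ))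
    (h3 : ∀ s : I01, 1/2 ≤ (s : ℝ) → (s : ℝ) ≤ 3/4 → y₁ s = -2 * (s : ℝ) + 2)
    (h4 : ∀ s : I01, 3/4 ≤ (s : ℝ) → y₁ s = 2 * (s : ℝ) - 1)
    (P : Measure CI)
    (hPdef : P = (1/2 : ℝ≥0∞) • Measure.dirac y₁ + (1/2 : ℝ≥0∞) • Measure.dirac (-y₁)) :
    Measure.map (fun f : CI => -f) P = P ∧
    avgACHDepth 2 P 0 = 17/32 ∧
    avgACHDepth 2 P 0 < avgACHDepth 2 P y₁ := by
  have hnegm : Measurable (fun f : CI => -f) := continuous_neg.measurable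
  -- basic bounds
  have hy : ∀ s : I01, 1/2 ≤ y₁ s ∧ y₁ s ≤ 1 := by
    intro s
    obtain ⟨hs0, hs1⟩ := s.2
    rcases le_or_gt (s:ℝ) (1/4) with h | h
    · rw [h1 s h]; constructor <;> linarith
    · rcases le_or_gt (s:ℝ) (1/2) with h' | h'
      · rw [h2 s h.le h']; constructor <;> linarith
      · rcases le_or_gt (s:ℝ) (3/4) with h'' | h''
        · rw [h3 s h'.le h'']; constructor <;> linarith
        · rw [h4 s h''.le]; constructor <;> linarith
  -- corner points
  have v00 : ((0:ℝ), (1:ℝ)) ∈ graph y₁ := by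
    refine ⟨⟨0, by norm_num⟩, ?_⟩
    have hv : y₁ ⟨0, by norm_num⟩ = 1 := by
      rw [h1 ⟨0, by norm_num⟩ (show (0:ℝ) ≤ 1/4 by norm_num)]
      show (-2:ℝ) * 0 + 1 = 1; norm_num
    rw [Prod.ext_iff]; exact ⟨rfl, hv⟩
  have v11 : ((1:ℝ), (1:ℝ)) ∈ graph y₁ := by
    refine ⟨⟨1, by norm_num⟩, ?_⟩
    have hv : y₁ ⟨1, by norm_num⟩ = 1 := by
      rw [h4 ⟨1, by norm_num⟩ (show (3:ℝ)/4 ≤ 1 by norm_num)]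
      show (2:ℝ) * 1 - 1 = 1; norm_num
    rw [Prod.ext_iff]; exact ⟨rfl, hv⟩
  have vq : ((1/4:ℝ), (1/2:ℝ)) ∈ graph y₁ := by
    refine ⟨⟨1/4, by norm_num⟩, ?_⟩
    have hv : y₁ ⟨1/4, by norm_num⟩ = 1/2 := by
      rw [h1 ⟨1/4, by norm_num⟩ (show (1:ℝ)/4 ≤ 1/4 by norm_num)]
      show (-2:ℝ) * (1/4) + 1 = 1/2; norm_num
    rw [Prod.ext_iff]; exact ⟨rfl, hv⟩
  have v3q : ((3/4:ℝ), (1/2:ℝ)) ∈ graph y₁ := by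
    refine ⟨⟨3/4, by norm_num⟩, ?_⟩
    have hv : y₁ ⟨3/4, by norm_num⟩ = 1/2 := by
      rw [h4 ⟨3/4, by norm_num⟩ (show (3:ℝ)/4 ≤ 3/4 by norm_num)]
      show (2:ℝ) * (3/4) - 1 = 1/2; norm_num
    rw [Prod.ext_iff]; exact ⟨rfl, hv⟩
  have hval_neg : ∀ s : I01, (-y₁) s = -(y₁ s) := fun s => rfl
  have n00 : ((0:ℝ), (-1:ℝ)) ∈ graph (-y₁) := by
    refine ⟨⟨0, by norm_num⟩, ?_⟩
    have hv : (-y₁) ⟨0, by norm_num⟩ = -1 := by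
      rw [hval_neg, h1 ⟨0, by norm_num⟩ (show (0:ℝ) ≤ 1/4 by norm_num)]
      show -((-2:ℝ) * 0 + 1) = -1; norm_num
    rw [Prod.ext_iff]; exact ⟨rfl, hv⟩
  have n11 : ((1:ℝ), (-1:ℝ)) ∈ graph (-y₁) := by
    refine ⟨⟨1, by norm_num⟩, ?_⟩
    have hv : (-y₁) ⟨1, by norm_num⟩ = -1 := by
      rw [hval_neg, h4 ⟨1, by norm_num⟩ (show (3:ℝ)/4 ≤ 1 by norm_num)]
      show -((2:ℝ) * 1 - 1) = -1; norm_num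
    rw [Prod.ext_iff]; exact ⟨rfl, hv⟩
  have w0 : ∀ (t : ℝ), 0 ≤ t → t ≤ 1 → ((t:ℝ), (0:ℝ)) ∈ graph (0:CI) := by
    intro t ht0 ht1
    exact ⟨⟨t, ⟨ht0, ht1⟩⟩, rfl⟩
  -- hull of graph y₁
  have hE1 : convexHull ℝ (graph y₁) = Ttrap := by
    apply Set.Subset.antisymm
    · apply convexHull_min ?_ convex_Ttrap
      rintro p ⟨s, rfl⟩
      obtain ⟨hs0, hs1⟩ := s.2
      refine ⟨?_, (hy s).2⟩
      show gfun (s:ℝ) ≤ y₁ s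
      rcases le_or_gt (s:ℝ) (1/4) with h | h
      · rw [gfun_eq1 h, h1 s h]; linarith
      · rcases le_or_gt (s:ℝ) (3/4) with h' | h'
        · rw [gfun_eq2 h.le h']; exact (hy s).1
        · rw [gfun_eq3 h'.le, h4 s h'.le]
    · rintro ⟨t, u⟩ ⟨hgu, hu1⟩
      have hH : Convex ℝ (convexHull ℝ (graph y₁)) := convex_convexHull ℝ _
      have hsub := subset_convexHull ℝ (graph y₁)
      have ht0 : 0 ≤ t := by have := gfun_ge1 t; simp only at hgu hu1; linarith
      have ht1 : t ≤ 1 := by have := gfun_ge2 t; simp only at hgu hu1; linarith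
      simp only at hgu hu1
      have htop : ((t, (1:ℝ)) : ℝ × ℝ) ∈ convexHull ℝ (graph y₁) :=
        combo2 hH (hsub v00) (hsub v11) (θ := t) ht0 ht1 (by ring) (by ring)
      have hbot : ((t, gfun t) : ℝ × ℝ) ∈ convexHull ℝ (graph y₁) := by
        rcases le_or_gt t (1/4) with h | h
        · rw [gfun_eq1 h]
          exact combo2 hH (hsub v00) (hsub vq) (θ := 4*t) (by linarith) (by linarith)
            (by ring) (by ring)
        · rcases le_or_gt t (3/4) with h' | h'
          · rw [gfun_eq2 h.le h']
            exact combo2 hH (hsub vq) (hsub v3q) (θ := 2*t - 1/2) (by linarith) (by linarith)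
              (by ring) (by ring)
          · rw [gfun_eq3 h'.le]
            exact combo2 hH (hsub v3q) (hsub v11) (θ := 4*t - 3) (by linarith) (by linarith)
              (by ring) (by ring)
      exact vertseg hH hbot htop hgu hu1
  -- hull of graph y₁ ∪ graph 0
  have hE2 : convexHull ℝ (graph y₁ ∪ graph (0:CI))
      = Set.Icc (0:ℝ) 1 ×ˢ Set.Icc (0:ℝ) 1 := by
    apply Set.Subset.antisymm
    · apply convexHull_min ?_ ((convex_Icc _ _).prod (convex_Icc _ _))
      rintro p (⟨s, rfl⟩ | ⟨s, rfl⟩)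
      · exact ⟨s.2, ⟨by linarith [(hy s).1], (hy s).2⟩⟩
      · exact ⟨s.2, ⟨le_refl 0, by norm_num⟩⟩
    · rintro ⟨t, u⟩ ⟨⟨ht0, ht1⟩, hu0, hu1⟩
      have hH : Convex ℝ (convexHull ℝ (graph y₁ ∪ graph (0:CI))) := convex_convexHull ℝ _
      have hsub := subset_convexHull ℝ (graph y₁ ∪ graph (0:CI))
      have htop : ((t, (1:ℝ)) : ℝ × ℝ) ∈ convexHull ℝ (graph y₁ ∪ graph (0:CI)) :=
        combo2 hH (hsub (Or.inl v00)) (hsub (Or.inl v11)) (θ := t) ht0 ht1 (by ring) (by ring)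
      exact vertseg hH (hsub (Or.inr (w0 t ht0 ht1))) htop hu0 hu1
  -- hull of graph y₁ ∪ graph (-y₁)
  have hE3 : convexHull ℝ (graph y₁ ∪ graph (-y₁))
      = Set.Icc (0:ℝ) 1 ×ˢ Set.Icc (-1:ℝ) 1 := by
    apply Set.Subset.antisymm
    · apply convexHull_min ?_ ((convex_Icc _ _).prod (convex_Icc _ _))
      rintro p (⟨s, rfl⟩ | ⟨s, rfl⟩)
      · exact ⟨s.2, ⟨by linarith [(hy s).1], (hy s).2⟩⟩
      · exact ⟨s.2, ⟨show (-1:ℝ) ≤ -(y₁ s) by linarith [(hy s).2],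
          show -(y₁ s) ≤ 1 by linarith [(hy s).1]⟩⟩
    · rintro ⟨t, u⟩ ⟨⟨ht0, ht1⟩, hu0, hu1⟩
      have hH : Convex ℝ (convexHull ℝ (graph y₁ ∪ graph (-y₁))) := convex_convexHull ℝ _
      have hsub := subset_convexHull ℝ (graph y₁ ∪ graph (-y₁))
      have htop : ((t, (1:ℝ)) : ℝ × ℝ) ∈ convexHull ℝ (graph y₁ ∪ graph (-y₁)) :=
        combo2 hH (hsub (Or.inl v00)) (hsub (Or.inl v11)) (θ := t) ht0 ht1 (by ring) (by ring)
      have hbot : ((t, (-1:ℝ)) : ℝ × ℝ) ∈ convexHull ℝ (graph y₁ ∪ graph (-y₁)) :=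
        combo2 hH (hsub (Or.inr n00)) (hsub (Or.inr n11)) (θ := t) ht0 ht1 (by ring) (by ring)
      exact vertseg hH hbot htop hu0 hu1
  -- hull of (graph y₁ ∪ graph (-y₁)) ∪ graph 0
  have hE4 : convexHull ℝ ((graph y₁ ∪ graph (-y₁)) ∪ graph (0:CI))
      = Set.Icc (0:ℝ) 1 ×ˢ Set.Icc (-1:ℝ) 1 := by
    apply Set.Subset.antisymm
    · apply convexHull_min ?_ ((convex_Icc _ _).prod (convex_Icc _ _))
      rintro p ((⟨s, rfl⟩ | ⟨s, rfl⟩) | ⟨s, rfl⟩)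
      · exact ⟨s.2, ⟨by linarith [(hy s).1], (hy s).2⟩⟩
      · exact ⟨s.2, ⟨show (-1:ℝ) ≤ -(y₁ s) by linarith [(hy s).2],
          show -(y₁ s) ≤ 1 by linarith [(hy s).1]⟩⟩
      · exact ⟨s.2, ⟨by norm_num, by norm_num⟩⟩
    · rw [← hE3]
      exact convexHull_mono Set.subset_union_left
  -- reflection identities
  have himg1 : graph (-y₁) = mneg '' graph y₁ := by
    rw [graph, graph, ← Set.range_comp]
    rfl
  have himg0 : mneg '' graph (0:CI) = graph (0:CI) := by
    rw [graph, ← Set.range_comp]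
    have hfun : (mneg ∘ fun t : I01 => ((t:ℝ), (0:CI) t)) = fun t : I01 => ((t:ℝ), (0:CI) t) := by
      funext t; simp [mneg]
    rw [hfun]
  -- ach values
  have A1 : ach (graph y₁) = 3/8 := by
    rw [ach, hE1, volume_Ttrap, ENNReal.toReal_ofReal (by norm_num)]
  have B1 : ach (graph y₁ ∪ graph (0:CI)) = 1 := by
    rw [ach, hE2, vol_rect, ENNReal.toReal_ofReal (by norm_num)]
    norm_num
  have C12 : ach (graph y₁ ∪ graph (-y₁)) = 2 := by
    rw [ach, hE3, vol_rect, ENNReal.toReal_ofReal (by norm_num)]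
    norm_num
  have C120 : ach ((graph y₁ ∪ graph (-y₁)) ∪ graph (0:CI)) = 2 := by
    rw [ach, hE4, vol_rect, ENNReal.toReal_ofReal (by norm_num)]
    norm_num
  have A2 : ach (graph (-y₁)) = 3/8 := by
    rw [himg1, ach, mneg_hull, hE1, mneg_image_volume isClosed_Ttrap.measurableSet,
        volume_Ttrap, ENNReal.toReal_ofReal (by norm_num)]
  have B2 : ach (graph (-y₁) ∪ graph (0:CI)) = 1 := by
    have h : graph (-y₁) ∪ graph (0:CI) = mneg '' (graph y₁ ∪ graph (0:CI)) := by
      rw [Set.image_union, ← himg1, himg0]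
    rw [h, ach, mneg_hull, hE2,
        mneg_image_volume (measurableSet_Icc.prod measurableSet_Icc), vol_rect,
        ENNReal.toReal_ofReal (by norm_num)]
    norm_num
  -- union algebra
  have u21 : graph (-y₁) ∪ graph y₁ = graph y₁ ∪ graph (-y₁) := Set.union_comm _ _
  have u11 : graph y₁ ∪ graph y₁ = graph y₁ := Set.union_self _
  have u22 : graph (-y₁) ∪ graph (-y₁) = graph (-y₁) := Set.union_self _
  have u121 : (graph y₁ ∪ graph (-y₁)) ∪ graph y₁ = graph y₁ ∪ graph (-y₁) :=
    Set.union_eq_left.2 Set.subset_union_left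
  -- ratios at θ = 0
  have r1θ : achRatio ![y₁] (0:CI) = 3/8 := by
    rw [achRatio_one, A1, B1]; norm_num
  have r2θ : achRatio ![-y₁] (0:CI) = 3/8 := by
    rw [achRatio_one, A2, B2]; norm_num
  have r11θ : achRatio ![y₁, y₁] (0:CI) = 3/8 := by
    rw [achRatio_two, u11, A1, B1]; norm_num
  have r12θ : achRatio ![y₁, -y₁] (0:CI) = 1 := by
    rw [achRatio_two, C12, C120]; norm_num
  have r21θ : achRatio ![-y₁, y₁] (0:CI) = 1 := by
    rw [achRatio_two, u21, C12, C120]; norm_num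
  have r22θ : achRatio ![-y₁, -y₁] (0:CI) = 3/8 := by
    rw [achRatio_two, u22, A2, B2]; norm_num
  -- ratios at y₁
  have r1y : achRatio ![y₁] y₁ = 1 := by
    rw [achRatio_one, u11, A1]; norm_num
  have r2y : achRatio ![-y₁] y₁ = 3/16 := by
    rw [achRatio_one, u21, A2, C12]; norm_num
  have r11y : achRatio ![y₁, y₁] y₁ = 1 := by
    rw [achRatio_two, u11, u11, A1]; norm_num
  have r12y : achRatio ![y₁, -y₁] y₁ = 1 := by
    rw [achRatio_two, u121, C12]; norm_num
  have r21y : achRatio ![-y₁, y₁] y₁ = 1 := by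
    rw [achRatio_two, u21, u121, C12]; norm_num
  have r22y : achRatio ![-y₁, -y₁] y₁ = 3/16 := by
    rw [achRatio_two, u22, u21, A2, C12]; norm_num
  -- depths
  have D1θ : ACHDepth 1 P (0:CI) = 3/8 := by
    rw [ACHDepth_one hPdef, r1θ, r2θ]; norm_num
  have D2θ : ACHDepth 2 P (0:CI) = 11/16 := by
    rw [ACHDepth_two hPdef, r11θ, r12θ, r21θ, r22θ]; norm_num
  have D1y : ACHDepth 1 P y₁ = 19/32 := by
    rw [ACHDepth_one hPdef, r1y, r2y]; norm_num
  have D2y : ACHDepth 2 P y₁ = 51/64 := by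
    rw [ACHDepth_two hPdef, r11y, r12y, r21y, r22y]; norm_num
  have hθ : avgACHDepth 2 P (0:CI) = 17/32 := by
    rw [avg_two, D1θ, D2θ]; norm_num
  have hy₁ : avgACHDepth 2 P y₁ = 89/128 := by
    rw [avg_two, D1y, D2y]; norm_num
  refine ⟨?_, hθ, ?_⟩
  · rw [hPdef, Measure.map_add _ _ hnegm, Measure.map_smul, Measure.map_smul,
        Measure.map_dirac' hnegm, Measure.map_dirac' hnegm, neg_neg]
    exact add_comm _ _
  · rw [hθ, hy₁]; norm_num

end
end
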